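/- arXiv:2007.07599 — 2 statements merged into one kernel-verified Lean document; each statement's English description precedes it below -/
import Mathlib

section
/- Suppose 0 ∉ B (a compact base of K*) and let μ := min over λ ∈ B of min_i |λ_i| > 0 and M := max over λ ∈ B of ‖Σ_i λ_i (ā_i, b̄_i)‖. Then the admissible set C(Ā, b̄) is bounded: C(Ā, b̄) ⊆ (M/μ)·B_m, the closed ball of radius M/μ in ℝ^m. -/
open Finset Pointwise

noncomputable def euclNorm {k : ℕ} (v : Fin k → ℝ) : ℝ := Real.sqrt (∑ i, v i ^ 2)

def coneHull {k : ℕ} (X : Set (Fin k → ℝ)) : Set (Fin k → ℝ) :=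
  {y | y = 0 ∨ ∃ t : ℝ, 0 ≤ t ∧ ∃ c ∈ convexHull ℝ X, y = t • c}

def dualCone {m : ℕ} (K : Set (Fin m → ℝ)) : Set (Fin m → ℝ) :=
  {a | ∀ x ∈ K, 0 ≤ ∑ i, a i * x i}

def Feas {m n : ℕ} (K : Set (Fin m → ℝ)) (Abar : Fin m → Fin n → ℝ) (bbar : Fin m → ℝ)
    (r : Fin m → ℝ) : Set (Fin n → ℝ) :=
  {x | ∀ (a : Fin m → Fin n → ℝ) (b : Fin m → ℝ),
      (∀ i, euclNorm (Fin.snoc (a i - Abar i) (b i - bbar i)) ≤ r i) →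
      (fun i => (∑ j, a i j * x j) + b i) ∈ -K}

def Adm {m n : ℕ} (K : Set (Fin m → ℝ)) (Abar : Fin m → Fin n → ℝ) (bbar : Fin m → ℝ) :
    Set (Fin m → ℝ) :=
  {r | (∀ i, 0 ≤ r i) ∧ (Feas K Abar bbar r).Nonempty}

noncomputable def rrf {m n : ℕ} (K : Set (Fin m → ℝ)) (Abar : Fin m → Fin n → ℝ)
    (bbar : Fin m → ℝ) : ℝ :=
  sSup {α : ℝ | 0 ≤ α ∧ (fun _ => α) ∈ Adm K Abar bbar}

def Epi {m n : ℕ} (Abar : Fin m → Fin n → ℝ) (bbar : Fin m → ℝ) (B : Set (Fin m → ℝ)) :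
    Set (Fin (n + 1) → ℝ) :=
  {y | ∃ l ∈ B, ∃ w : ℝ, 0 ≤ w ∧
    y = Fin.snoc (fun j => ∑ i, l i * Abar i j) (-(∑ i, l i * bbar i) + w)}

noncomputable def edist0 {m n : ℕ} (Abar : Fin m → Fin n → ℝ) (bbar : Fin m → ℝ)
    (B : Set (Fin m → ℝ)) : ℝ :=
  sInf {t : ℝ | ∃ y ∈ Epi Abar bbar B, t = euclNorm y}

def IsCompactBase {m : ℕ} (C B : Set (Fin m → ℝ)) : Prop :=
  IsCompact B ∧ Convex ℝ B ∧ B ⊆ C ∧ (0 : Fin m → ℝ) ∉ B ∧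
    C = {y | ∃ t : ℝ, 0 ≤ t ∧ ∃ b ∈ B, y = t • b}

def IsClosedConvexCone {m : ℕ} (K : Set (Fin m → ℝ)) : Prop :=
  IsClosed K ∧ Convex ℝ K ∧ ∀ t : ℝ, 0 ≤ t → ∀ x ∈ K, t • x ∈ K

noncomputable def c1 {m : ℕ} (n : ℕ) (B : Set (Fin m → ℝ)) : ℝ :=
  (sSup {t : ℝ | ∃ l ∈ B, ∃ u : Fin m → (Fin (n + 1) → ℝ),
    (∀ i, euclNorm (u i) ≤ 1) ∧ t = euclNorm (∑ i, l i • u i)})⁻¹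

noncomputable def c2 {m : ℕ} (B : Set (Fin m → ℝ)) : ℝ :=
  (sInf {t : ℝ | ∃ l ∈ B, t = ∑ i, |l i|})⁻¹
lemma enorm_nonneg' {k : ℕ} (v : Fin k → ℝ) : 0 ≤ euclNorm v := Real.sqrt_nonneg _

lemma enorm_smul' {k : ℕ} (c : ℝ) (v : Fin k → ℝ) : euclNorm (c • v) = |c| * euclNorm v := by
  unfold euclNorm
  have : ∑ i, (c • v) i ^ 2 = c ^ 2 * ∑ i, v i ^ 2 := by
    rw [Finset.mul_sum]; exact Finset.sum_congr rfl fun i _ => by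
      simp [Pi.smul_apply, smul_eq_mul, mul_pow]
  rw [this, Real.sqrt_mul (sq_nonneg c), Real.sqrt_sq_eq_abs]

lemma enorm_neg' {k : ℕ} (v : Fin k → ℝ) : euclNorm (-v) = euclNorm v := by
  unfold euclNorm; congr 1; exact Finset.sum_congr rfl fun i _ => by simp

lemma cs' {k : ℕ} (f g : Fin k → ℝ) : ∑ i, f i * g i ≤ euclNorm f * euclNorm g := by
  have h := Finset.sum_mul_sq_le_sq_mul_sq Finset.univ f g
  have h1 : ∑ i, f i * g i ≤ |∑ i, f i * g i| := le_abs_self _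
  have h2 : |∑ i, f i * g i| = Real.sqrt ((∑ i, f i * g i) ^ 2) := (Real.sqrt_sq_eq_abs _).symm
  unfold euclNorm
  rw [← Real.sqrt_mul (Finset.sum_nonneg fun i _ => sq_nonneg _)]
  calc ∑ i, f i * g i ≤ Real.sqrt ((∑ i, f i * g i) ^ 2) := h2 ▸ h1
    _ ≤ _ := Real.sqrt_le_sqrt h

lemma enorm_le_sum' {k : ℕ} (r : Fin k → ℝ) (h : ∀ i, 0 ≤ r i) : euclNorm r ≤ ∑ i, r i := by
  unfold euclNorm
  calc Real.sqrt (∑ i, r i ^ 2) ≤ Real.sqrt ((∑ i, r i) ^ 2) :=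
        Real.sqrt_le_sqrt (Finset.sum_sq_le_sq_sum_of_nonneg fun i _ => h i)
    _ = ∑ i, r i := Real.sqrt_sq (Finset.sum_nonneg fun i _ => h i)

lemma enorm_continuous' {k : ℕ} : Continuous (euclNorm (k := k)) := by
  unfold euclNorm
  exact Real.continuous_sqrt.comp (continuous_finset_sum _ fun i _ => (continuous_apply i).pow 2)

/-- boundedness of the admissible set. -/
theorem statement10 {m n : ℕ} (K : Set (Fin m → ℝ)) (hclosed : IsClosed K) (hconv : Convex ℝ K)
    (hcone : ∀ t : ℝ, 0 ≤ t → ∀ x ∈ K, t • x ∈ K) (hint : (interior K).Nonempty)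
    (B : Set (Fin m → ℝ)) (hB : IsCompactBase (dualCone K) B)
    (Abar : Fin m → Fin n → ℝ) (bbar : Fin m → ℝ)
    (hμ : 0 < sInf {t : ℝ | ∃ l ∈ B, ∃ i : Fin m, t = |l i|}) :
    Adm K Abar bbar ⊆ {r : Fin m → ℝ | euclNorm r ≤
      (sSup {t : ℝ | ∃ l ∈ B, t = euclNorm (∑ i, l i • (Fin.snoc (Abar i) (bbar i) : Fin (n + 1) → ℝ))}) /
        sInf {t : ℝ | ∃ l ∈ B, ∃ i : Fin m, t = |l i|}} := by
  intro r hr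
  obtain ⟨hr0, x, hx⟩ := hr
  set S1 := {t : ℝ | ∃ l ∈ B, t = euclNorm (∑ i, l i • (Fin.snoc (Abar i) (bbar i) : Fin (n + 1) → ℝ))} with hS1
  set S2 := {t : ℝ | ∃ l ∈ B, ∃ i : Fin m, t = |l i|} with hS2
  set μ := sInf S2 with hμdef
  have hBne : B.Nonempty := by
    rcases B.eq_empty_or_nonempty with h | h
    · exfalso
      have hemp : S2 = ∅ := by
        rw [hS2]; ext t; simp [h]
      rw [hμdef, hemp, Real.sInf_empty] at hμ
      exact lt_irrefl 0 hμ
    · exact h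
  obtain ⟨l, hl⟩ := hBne
  set u : Fin (n + 1) → ℝ := Fin.snoc x 1 with hu
  set N := euclNorm u with hN
  have hsum0 : (0 : ℝ) ≤ ∑ j, x j ^ 2 := Finset.sum_nonneg fun j _ => sq_nonneg _
  have hNsq : N ^ 2 = (∑ j, x j ^ 2) + 1 := by
    rw [hN, hu]
    show (euclNorm (Fin.snoc x 1)) ^ 2 = _
    unfold euclNorm
    rw [Real.sq_sqrt (Finset.sum_nonneg fun j _ => sq_nonneg _)]
    rw [Fin.sum_univ_castSucc]
    simp
  have hNnonneg : 0 ≤ N := by rw [hN]; exact enorm_nonneg' u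
  have hNpos : 0 < N := by nlinarith [hNsq, hsum0, hNnonneg]
  set s : Fin m → ℝ := fun i => if 0 ≤ l i then 1 else -1 with hs
  have hs_abs : ∀ i, |s i| = 1 := fun i => by
    by_cases h : 0 ≤ l i <;> simp [hs, h]
  have hls : ∀ i, l i * s i = |l i| := fun i => by
    by_cases h : 0 ≤ l i
    · simp [hs, h, abs_of_nonneg h]
    · simp [hs, h, abs_of_neg (lt_of_not_ge h)]
  set c : Fin m → ℝ := fun i => r i * s i / N with hc
  set a : Fin m → Fin n → ℝ := fun i j => Abar i j + c i * x j with ha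
  set b : Fin m → ℝ := fun i => bbar i + c i with hb
  have hpert : ∀ i, euclNorm (Fin.snoc (a i - Abar i) (b i - bbar i)) ≤ r i := by
    intro i
    have h1 : (Fin.snoc (a i - Abar i) (b i - bbar i) : Fin (n + 1) → ℝ) = c i • u := by
      funext k
      refine Fin.lastCases ?_ ?_ k
      · rw [Fin.snoc_last]
        simp [hb, hu, Pi.smul_apply, smul_eq_mul, Fin.snoc_last]
      · intro j
        rw [Fin.snoc_castSucc]
        simp [ha, hu, Pi.smul_apply, smul_eq_mul, Pi.sub_apply, Fin.snoc_castSucc]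
    rw [h1, enorm_smul']
    have habs : |c i| = r i / N := by
      rw [hc]
      rw [abs_div, abs_mul, hs_abs i, abs_of_nonneg (hr0 i), abs_of_nonneg hNnonneg, mul_one]
    rw [habs, ← hN, div_mul_cancel₀ _ (ne_of_gt hNpos)]
  have hz := hx a b hpert
  rw [Set.mem_neg] at hz
  have hdual : l ∈ dualCone K := hB.2.2.1 hl
  have hineq0 := hdual _ hz
  have hsum_le : ∑ i, l i * ((∑ j, a i j * x j) + b i) ≤ 0 := by
    have heq : ∑ i, l i * (-(fun i => (∑ j, a i j * x j) + b i) : Fin m → ℝ) i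
        = -∑ i, l i * ((∑ j, a i j * x j) + b i) := by
      rw [← Finset.sum_neg_distrib]
      exact Finset.sum_congr rfl fun i _ => by simp only [Pi.neg_apply]; ring
    rw [heq] at hineq0
    linarith
  set w : Fin m → ℝ := fun i => (∑ j, Abar i j * x j) + bbar i with hw
  have hzi : ∀ i, (∑ j, a i j * x j) + b i = w i + r i * s i * N := by
    intro i
    have expand : ∑ j, a i j * x j = (∑ j, Abar i j * x j) + c i * ∑ j, x j ^ 2 := by
      rw [Finset.mul_sum, ← Finset.sum_add_distrib]
      exact Finset.sum_congr rfl fun j _ => by simp [ha]; ring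
    have hcN : c i * ((∑ j, x j ^ 2) + 1) = r i * s i * N := by
      rw [← hNsq, hc]
      field_simp
    rw [expand]
    simp only [hb, hw]
    nlinarith [hcN]
  have hmain : (∑ i, l i * w i) + (∑ i, |l i| * r i) * N ≤ 0 := by
    have heq2 : ∑ i, l i * ((∑ j, a i j * x j) + b i)
        = (∑ i, l i * w i) + (∑ i, |l i| * r i) * N := by
      rw [Finset.sum_mul, ← Finset.sum_add_distrib]
      refine Finset.sum_congr rfl fun i _ => ?_
      rw [hzi i, mul_add]
      congr 1
      rw [← hls i]; ring
    rw [heq2] at hsum_le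
    exact hsum_le
  set v : Fin m → Fin (n + 1) → ℝ := fun i => Fin.snoc (Abar i) (bbar i) with hv
  have inner_eq : ∀ i, ∑ k, v i k * u k = w i := by
    intro i
    simp only [hv, hu, hw]
    rw [Fin.sum_univ_castSucc]
    simp
  have hlw : ∑ i, l i * w i = ∑ k, (∑ i, l i • v i) k * u k := by
    calc ∑ i, l i * w i = ∑ i, ∑ k, l i * v i k * u k := by
          refine Finset.sum_congr rfl fun i _ => ?_
          rw [← inner_eq i, Finset.mul_sum]
          exact Finset.sum_congr rfl fun k _ => by ring
      _ = ∑ k, ∑ i, l i * v i k * u k := Finset.sum_comm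
      _ = ∑ k, (∑ i, l i • v i) k * u k := by
          refine Finset.sum_congr rfl fun k _ => ?_
          rw [Finset.sum_apply, ← Finset.sum_mul]
          exact congrArg (· * u k) (Finset.sum_congr rfl fun i _ => by
            simp [Pi.smul_apply, smul_eq_mul])
  have hcs : -∑ i, l i * w i ≤ euclNorm (∑ i, l i • v i) * N := by
    rw [hlw]
    have hcs0 := cs' (-(∑ i, l i • v i)) u
    rw [enorm_neg'] at hcs0
    calc -∑ k, (∑ i, l i • v i) k * u k = ∑ k, (-(∑ i, l i • v i)) k * u k := by
          rw [← Finset.sum_neg_distrib]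
          exact Finset.sum_congr rfl fun k _ => by simp
      _ ≤ euclNorm (∑ i, l i • v i) * euclNorm u := hcs0
      _ = euclNorm (∑ i, l i • v i) * N := by rw [hN]
  have hkey : ∑ i, |l i| * r i ≤ euclNorm (∑ i, l i • v i) := by
    have h1 : (∑ i, |l i| * r i) * N ≤ euclNorm (∑ i, l i • v i) * N := by linarith
    exact le_of_mul_le_mul_right h1 hNpos
  have hS1img : S1 = (fun l : Fin m → ℝ => euclNorm (∑ i, l i • v i)) '' B := by
    ext t
    constructor
    · rintro ⟨l', hl', rfl⟩
      exact ⟨l', hl', by simp [hv]⟩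
    · rintro ⟨l', hl', rfl⟩
      exact ⟨l', hl', by simp [hv]⟩
  have hcont : Continuous fun l : Fin m → ℝ => euclNorm (∑ i, l i • v i) :=
    enorm_continuous'.comp
      (continuous_finset_sum _ fun i _ => (continuous_apply i).smul continuous_const)
  have hbdd : BddAbove S1 := hS1img ▸ (hB.1.image hcont).bddAbove
  have hMl : euclNorm (∑ i, l i • v i) ≤ sSup S1 :=
    le_csSup hbdd ⟨l, hl, by simp [hv]⟩
  have hμle : ∀ i, μ ≤ |l i| := by
    intro i
    refine csInf_le ⟨0, ?_⟩ ⟨l, hl, i, rfl⟩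
    rintro t ⟨l', _, i', rfl⟩
    exact abs_nonneg _
  have h1 : μ * euclNorm r ≤ μ * ∑ i, r i :=
    mul_le_mul_of_nonneg_left (enorm_le_sum' r hr0) (le_of_lt hμ)
  have h2 : μ * ∑ i, r i ≤ ∑ i, |l i| * r i := by
    rw [Finset.mul_sum]
    exact Finset.sum_le_sum fun i _ => mul_le_mul_of_nonneg_right (hμle i) (hr0 i)
  have hfin : μ * euclNorm r ≤ sSup S1 := le_trans h1 (le_trans h2 (le_trans hkey hMl))
  simp only [Set.mem_setOf_eq]
  rw [le_div_iff₀ hμ]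
  linarith
end

section
/- Let B be a compact base of K*. Define C₁ := 1 / max{‖Σ_{i=1}^m λ_i u_i‖ : λ ∈ B, ‖u_i‖ ≤ 1, u_i ∈ ℝ^{n+1}} and C₂ := 1 / min{Σ_{i=1}^m |λ_i| : λ ∈ B}. Then the radius of robust feasibility satisfies C₁·dist(0_{n+1}, E(Ā, b̄, B)) ≤ ρ(Ā, b̄) ≤ C₂·dist(0_{n+1}, E(Ā, b̄, B)). -/
open Finset Pointwise

/-! ### Auxiliary infrastructure -/

abbrev Euc (k : ℕ) := EuclideanSpace ℝ (Fin k)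
noncomputable def toE {k : ℕ} (v : Fin k → ℝ) : Euc k := (WithLp.equiv 2 _).symm v
noncomputable def liftE {k : ℕ} (S : Set (Fin k → ℝ)) : Set (Euc k) :=
  (WithLp.equiv 2 (Fin k → ℝ)) ⁻¹' S

lemma mem_liftE {k : ℕ} {S : Set (Fin k → ℝ)} {v : Fin k → ℝ} : toE v ∈ liftE S ↔ v ∈ S := Iff.rfl

lemma enorm_eq {k : ℕ} (v : Fin k → ℝ) : euclNorm v = ‖toE v‖ := by
  rw [EuclideanSpace.norm_eq, euclNorm]
  congr 1; apply Finset.sum_congr rfl; intro i _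
  rw [Real.norm_eq_abs, sq_abs]; rfl

lemma inner_toE {k : ℕ} (v w : Fin k → ℝ) : (inner ℝ (toE v) (toE w) : ℝ) = ∑ i, v i * w i := by
  simp [PiLp.inner_apply, RCLike.inner_apply]; exact Finset.sum_congr rfl fun i _ => mul_comm _ _

lemma enorm_cauchy {k : ℕ} (v w : Fin k → ℝ) : |∑ i, v i * w i| ≤ euclNorm v * euclNorm w := by
  rw [← inner_toE, enorm_eq, enorm_eq]; exact abs_real_inner_le_norm _ _

lemma euclNorm_eq_zero' {k : ℕ} {v : Fin k → ℝ} (h : euclNorm v ≤ 0) : v = 0 := by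
  rw [enorm_eq] at h
  have := norm_eq_zero.mp (le_antisymm h (norm_nonneg _))
  exact congrArg (WithLp.equiv 2 _) this

lemma enorm_sum_smul_le {k m : ℕ} (c : Fin m → ℝ) (u : Fin m → (Fin k → ℝ)) :
    euclNorm (∑ i, c i • u i) ≤ ∑ i, |c i| * euclNorm (u i) := by
  have ht : toE (∑ i, c i • u i) = ∑ i, c i • toE (u i) := by simp [toE]
  rw [enorm_eq, ht]
  refine (norm_sum_le _ _).trans ?_
  refine Finset.sum_le_sum fun i _ => ?_
  rw [norm_smul, Real.norm_eq_abs, enorm_eq]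

lemma enorm_sub_smul_le {k : ℕ} (u w : Fin k → ℝ) (c : ℝ) :
    euclNorm (u - c • w) ≤ euclNorm u + |c| * euclNorm w := by
  rw [enorm_eq, enorm_eq, enorm_eq, show toE (u - c • w) = toE u - c • toE w by simp [toE]]
  refine (norm_sub_le _ _).trans ?_
  rw [norm_smul, Real.norm_eq_abs]

lemma snoc_dot {n : ℕ} (u v : Fin n → ℝ) (a b : ℝ) :
    ∑ i, Fin.snoc u a i * Fin.snoc v b i = (∑ j, u j * v j) + a * b := by
  rw [Fin.sum_univ_castSucc]
  simp [Fin.snoc_castSucc, Fin.snoc_last]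

lemma enorm_snoc_sq {n : ℕ} (u : Fin n → ℝ) (a : ℝ) :
    euclNorm (Fin.snoc u a) ^ 2 = (∑ j, u j ^ 2) + a ^ 2 := by
  rw [euclNorm, Real.sq_sqrt]
  · rw [Fin.sum_univ_castSucc]; simp
  · positivity

lemma enorm_snoc_neg {n : ℕ} (u : Fin n → ℝ) (a : ℝ) :
    euclNorm (Fin.snoc u (-a)) = euclNorm (Fin.snoc u a) := by
  rw [euclNorm, euclNorm, Fin.sum_univ_castSucc, Fin.sum_univ_castSucc]; simp

lemma snoc_smul {n : ℕ} (c : ℝ) (u : Fin n → ℝ) (a : ℝ) :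
    Fin.snoc (c • u) (c * a) = c • (Fin.snoc u a : Fin (n+1) → ℝ) := by
  funext i
  refine Fin.lastCases ?_ ?_ i
  · simp
  · intro j; simp

lemma snoc_sub {n : ℕ} (u v : Fin n → ℝ) (a b : ℝ) :
    (Fin.snoc u a : Fin (n+1) → ℝ) - Fin.snoc v b = Fin.snoc (u - v) (a - b) := by
  funext i
  refine Fin.lastCases ?_ ?_ i
  · simp
  · intro j; simp

lemma one_le_enorm_snoc_one {n : ℕ} (x : Fin n → ℝ) : 1 ≤ euclNorm (Fin.snoc x 1) := by
  have h := enorm_snoc_sq x 1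
  nlinarith [enorm_nonneg' (Fin.snoc x (1:ℝ)),
    Finset.sum_nonneg (fun j (_ : j ∈ Finset.univ) => sq_nonneg (x j))]

noncomputable def sgn (x : ℝ) : ℝ := if x < 0 then -1 else 1
lemma mul_sgn (x : ℝ) : x * sgn x = |x| := by
  unfold sgn; rcases lt_or_ge x 0 with h | h
  · rw [if_pos h, abs_of_neg h]; ring
  · rw [if_neg (not_lt.mpr h), abs_of_nonneg h]; ring
lemma abs_sgn (x : ℝ) : |sgn x| = 1 := by
  unfold sgn; rcases lt_or_ge x 0 with h | h
  · rw [if_pos h]; norm_num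
  · rw [if_neg (not_lt.mpr h)]; norm_num

lemma swap_sum {m n : ℕ} (l : Fin m → ℝ) (A : Fin m → Fin n → ℝ) (x : Fin n → ℝ) :
    ∑ j, (∑ i, l i * A i j) * x j = ∑ i, l i * ∑ j, A i j * x j := by
  simp only [Finset.sum_mul, Finset.mul_sum]
  rw [Finset.sum_comm]
  apply Finset.sum_congr rfl; intros
  apply Finset.sum_congr rfl; intros; ring

lemma memNegK {m : ℕ} (K : Set (Fin m → ℝ)) (hclosed : IsClosed K) (hconv : Convex ℝ K)
    (hcone : ∀ t : ℝ, 0 ≤ t → ∀ x ∈ K, t • x ∈ K) (hKne : K.Nonempty)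
    (B : Set (Fin m → ℝ)) (hB : IsCompactBase (dualCone K) B)
    (z : Fin m → ℝ) (hz : ∀ l ∈ B, ∑ i, l i * z i ≤ 0) : z ∈ -K := by
  rw [Set.mem_neg]
  by_contra hnz
  set CK : ProperCone ℝ (Euc m) :=
    { carrier := liftE K
      zero_mem' := by
        obtain ⟨x0, hx0⟩ := hKne
        have h0 := hcone 0 le_rfl x0 hx0
        rw [zero_smul] at h0
        show WithLp.equiv 2 (Fin m → ℝ) 0 ∈ K
        simpa using h0
      isClosed' := hclosed.preimage (PiLp.continuousLinearEquiv 2 ℝ (fun _ : Fin m => ℝ)).continuous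
      smul_mem' := fun c {x} hx => by
        exact hcone c c.2 _ hx
      add_mem' := fun {x} {y} hx hy => by
        have h2 : ((2:ℝ)) • ((1/2 : ℝ) • x + (1/2 : ℝ) • y) = x + y := by
          rw [smul_add, smul_smul, smul_smul]; norm_num
        have hmem : (1/2 : ℝ) • x + (1/2 : ℝ) • y ∈ liftE K :=
          hconv hx hy (by norm_num) (by norm_num) (by norm_num)
        rw [← h2]; exact hcone 2 (by norm_num) _ hmem } with hCK
  have hne : (CK : Set (Euc m)).Nonempty := let ⟨x0, hx0⟩ := hKne; ⟨toE x0, hx0⟩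
  have hcl : IsClosed (CK : Set (Euc m)) :=
    hclosed.preimage (PiLp.continuousLinearEquiv 2 ℝ (fun _ : Fin m => ℝ)).continuous
  have hb : toE (-z) ∉ CK := hnz
  obtain ⟨y, hy1, hy2⟩ :=
    CK.hyperplane_separation' hb
  set yf : Fin m → ℝ := WithLp.equiv 2 (Fin m → ℝ) y with hyf
  have hyE : toE yf = y := rfl
  have hdual : yf ∈ dualCone K := by
    intro x hx
    have := hy1 (toE x) hx
    rw [← hyE, inner_toE x yf] at this
    calc (0:ℝ) ≤ ∑ i, x i * yf i := this
    _ = ∑ i, yf i * x i := by apply Finset.sum_congr rfl; intros; ring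
  rw [hB.2.2.2.2] at hdual
  obtain ⟨t, ht, bb, hbb, hbbeq⟩ := hdual
  rw [← hyE, hbbeq] at hy2
  have hinner : (inner ℝ (toE (t • bb)) (toE (-z)) : ℝ) = t * ∑ i, bb i * (- z i) := by
    rw [inner_toE, Finset.mul_sum]
    apply Finset.sum_congr rfl; intros; simp [mul_assoc]
  rw [real_inner_comm, hinner] at hy2
  have h1 : ∑ i, bb i * (- z i) = - ∑ i, bb i * z i := by
    rw [← Finset.sum_neg_distrib]; apply Finset.sum_congr rfl; intros; ring
  have h2 : ∑ i, bb i * z i ≤ 0 := hz bb hbb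
  rw [h1] at hy2
  nlinarith [h2, ht]

/-- Sufficient condition for robust feasibility in terms of the base `B`. -/
lemma feas_of {m n : ℕ} (K : Set (Fin m → ℝ)) (hclosed : IsClosed K) (hconv : Convex ℝ K)
    (hcone : ∀ t : ℝ, 0 ≤ t → ∀ x ∈ K, t • x ∈ K) (hKne : K.Nonempty)
    (B : Set (Fin m → ℝ)) (hB : IsCompactBase (dualCone K) B)
    (Abar : Fin m → Fin n → ℝ) (bbar : Fin m → ℝ) (α : ℝ) (hα : 0 ≤ α) (x : Fin n → ℝ)
    (hx : ∀ l ∈ B, (∑ i, l i * ((∑ j, Abar i j * x j) + bbar i)) ≤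
      -(α * (∑ i, |l i|) * euclNorm (Fin.snoc x 1))) :
    x ∈ Feas K Abar bbar (fun _ => α) := by
  intro a b hrow
  set N := euclNorm (Fin.snoc x 1) with hN
  have hN0 : 0 ≤ N := enorm_nonneg' _
  apply memNegK K hclosed hconv hcone hKne B hB
  intro l hl
  have hdecomp : ∀ i, (∑ j, a i j * x j) + b i =
      ((∑ j, Abar i j * x j) + bbar i) + ((∑ j, (a i j - Abar i j) * x j) + (b i - bbar i)) := by
    intro i
    have : ∑ j, (a i j - Abar i j) * x j = (∑ j, a i j * x j) - ∑ j, Abar i j * x j := by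
      rw [← Finset.sum_sub_distrib]; apply Finset.sum_congr rfl; intros; ring
    rw [this]; ring
  have hdelta : ∀ i, l i * ((∑ j, (a i j - Abar i j) * x j) + (b i - bbar i)) ≤ |l i| * (α * N) := by
    intro i
    have hD : (∑ j, (a i j - Abar i j) * x j) + (b i - bbar i) =
        ∑ k, Fin.snoc (a i - Abar i) (b i - bbar i) k * Fin.snoc x 1 k := by
      rw [snoc_dot]
      simp [Pi.sub_apply]
    have habs : |(∑ j, (a i j - Abar i j) * x j) + (b i - bbar i)| ≤ α * N := by
      rw [hD]
      refine (enorm_cauchy _ _).trans ?_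
      exact mul_le_mul_of_nonneg_right (hrow i) hN0
    calc l i * ((∑ j, (a i j - Abar i j) * x j) + (b i - bbar i))
        ≤ |l i * ((∑ j, (a i j - Abar i j) * x j) + (b i - bbar i))| := le_abs_self _
      _ = |l i| * |(∑ j, (a i j - Abar i j) * x j) + (b i - bbar i)| := abs_mul _ _
      _ ≤ |l i| * (α * N) := mul_le_mul_of_nonneg_left habs (abs_nonneg _)
  calc ∑ i, l i * ((∑ j, a i j * x j) + b i)
      = (∑ i, l i * ((∑ j, Abar i j * x j) + bbar i)) +
        ∑ i, l i * ((∑ j, (a i j - Abar i j) * x j) + (b i - bbar i)) := by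
        rw [← Finset.sum_add_distrib]
        apply Finset.sum_congr rfl; intro i _; rw [hdecomp i]; ring
    _ ≤ -(α * (∑ i, |l i|) * N) + ∑ i, |l i| * (α * N) := by
        exact add_le_add (hx l hl) (Finset.sum_le_sum fun i _ => hdelta i)
    _ = 0 := by rw [← Finset.sum_mul]; ring

lemma B_nonempty {m : ℕ} {K B : Set (Fin m → ℝ)} (hB : IsCompactBase (dualCone K) B) :
    B.Nonempty := by
  have h0 : (0 : Fin m → ℝ) ∈ dualCone K := by intro x _; simp
  rw [hB.2.2.2.2] at h0
  obtain ⟨t, _, bb, hbb, _⟩ := h0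
  exact ⟨bb, hbb⟩

lemma sum_abs_pos {m : ℕ} {l : Fin m → ℝ} (hl : l ≠ 0) : 0 < ∑ i, |l i| := by
  obtain ⟨i, hi⟩ := Function.ne_iff.mp hl
  have h1 : |l i| ≤ ∑ i, |l i| :=
    Finset.single_le_sum (fun j _ => abs_nonneg (l j)) (Finset.mem_univ i)
  have : 0 < |l i| := abs_pos.mpr hi
  linarith

lemma continuous_sum_abs {m : ℕ} : Continuous (fun l : Fin m → ℝ => ∑ i, |l i|) :=
  continuous_finset_sum _ fun i _ => (continuous_apply i).abs

section MIlem
variable {m n : ℕ} {K B : Set (Fin m → ℝ)}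

lemma sum_abs_mem_S1 (hl : ∀ l' ∈ B, True) {l : Fin m → ℝ} (hlB : l ∈ B) :
    (∑ i, |l i|) ∈ {t : ℝ | ∃ l ∈ B, ∃ u : Fin m → (Fin (n + 1) → ℝ),
      (∀ i, euclNorm (u i) ≤ 1) ∧ t = euclNorm (∑ i, l i • u i)} := by
  set e : Fin (n+1) → ℝ := Fin.snoc (0 : Fin n → ℝ) 1 with he
  have hee : euclNorm e = 1 := by
    rw [euclNorm, Fin.sum_univ_castSucc]; simp [he]
  refine ⟨l, hlB, fun i => sgn (l i) • e, fun i => ?_, ?_⟩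
  · rw [enorm_smul', abs_sgn, hee]; norm_num
  · have hsum : ∑ i, l i • (sgn (l i) • e) = (∑ i, |l i|) • e := by
      calc ∑ i, l i • (sgn (l i) • e) = ∑ i, |l i| • e :=
            Finset.sum_congr rfl fun i _ => by rw [smul_smul, mul_sgn]
        _ = (∑ i, |l i|) • e := (Finset.sum_smul).symm
    rw [hsum, enorm_smul', hee, mul_one,
      abs_of_nonneg (Finset.sum_nonneg fun i _ => abs_nonneg _)]

lemma S1_bddAbove (hBcpt : IsCompact B) :
    BddAbove {t : ℝ | ∃ l ∈ B, ∃ u : Fin m → (Fin (n + 1) → ℝ),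
      (∀ i, euclNorm (u i) ≤ 1) ∧ t = euclNorm (∑ i, l i • u i)} := by
  rcases B.eq_empty_or_nonempty with hBe | hBne
  · subst hBe; simp [BddAbove, Set.Nonempty, upperBounds]
  obtain ⟨l₁, hl₁B, hmax⟩ := hBcpt.exists_isMaxOn hBne continuous_sum_abs.continuousOn
  refine ⟨∑ i, |l₁ i|, fun t ht => ?_⟩
  obtain ⟨l, hlB, u, hu, rfl⟩ := ht
  calc euclNorm (∑ i, l i • u i) ≤ ∑ i, |l i| * euclNorm (u i) := enorm_sum_smul_le _ _
    _ ≤ ∑ i, |l i| * 1 := Finset.sum_le_sum fun i _ =>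
        mul_le_mul_of_nonneg_left (hu i) (abs_nonneg _)
    _ = ∑ i, |l i| := by simp
    _ ≤ ∑ i, |l₁ i| := hmax hlB

end MIlem

lemma dual_pair {m : ℕ} {K B : Set (Fin m → ℝ)} (hB : IsCompactBase (dualCone K) B)
    {l : Fin m → ℝ} (hl : l ∈ B) {z : Fin m → ℝ} (hz : z ∈ -K) : ∑ i, l i * z i ≤ 0 := by
  have hld : l ∈ dualCone K := hB.2.2.1 hl
  rw [Set.mem_neg] at hz
  have h := hld _ hz
  have : ∑ i, l i * (-z) i = -∑ i, l i * z i := by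
    rw [← Finset.sum_neg_distrib]; apply Finset.sum_congr rfl; intros; simp
  rw [this] at h; linarith

lemma epi_convex {m n : ℕ} (Abar : Fin m → Fin n → ℝ) (bbar : Fin m → ℝ)
    {B : Set (Fin m → ℝ)} (hBconv : Convex ℝ B) : Convex ℝ (Epi Abar bbar B) := by
  rintro y₁ ⟨l₁, hl₁, w₁, hw₁, rfl⟩ y₂ ⟨l₂, hl₂, w₂, hw₂, rfl⟩ p q hp hq hpq
  refine ⟨p • l₁ + q • l₂, hBconv hl₁ hl₂ hp hq hpq, p * w₁ + q * w₂,
    by positivity, ?_⟩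
  funext i
  refine Fin.lastCases ?_ ?_ i
  · simp only [Pi.add_apply, Pi.smul_apply, Fin.snoc_last, smul_eq_mul]
    rw [show ∑ i, (p * l₁ i + q * l₂ i) * bbar i
        = p * ∑ i, l₁ i * bbar i + q * ∑ i, l₂ i * bbar i by
      rw [Finset.mul_sum, Finset.mul_sum, ← Finset.sum_add_distrib]
      apply Finset.sum_congr rfl; intros; ring]
    ring
  · intro j
    simp only [Pi.add_apply, Pi.smul_apply, Fin.snoc_castSucc, smul_eq_mul]
    rw [show ∑ i, (p * l₁ i + q * l₂ i) * Abar i j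
        = p * ∑ i, l₁ i * Abar i j + q * ∑ i, l₂ i * Abar i j by
      rw [Finset.mul_sum, Finset.mul_sum, ← Finset.sum_add_distrib]
      apply Finset.sum_congr rfl; intros; ring]

/-- lower and upper bounds for the radius of robust feasibility in terms of
the distance from the origin to the epigraphical set. -/
theorem statement12 {m n : ℕ} (K : Set (Fin m → ℝ)) (hclosed : IsClosed K) (hconv : Convex ℝ K)
    (hcone : ∀ t : ℝ, 0 ≤ t → ∀ x ∈ K, t • x ∈ K)
    (hpointed : K ∩ (-K) = {0}) (hint : (interior K).Nonempty)
    (hne0 : K ≠ {0}) (hneuniv : K ≠ Set.univ)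
    (B : Set (Fin m → ℝ)) (hB : IsCompactBase (dualCone K) B)
    (Abar : Fin m → Fin n → ℝ) (bbar : Fin m → ℝ)
    (hfeas : ∃ x : Fin n → ℝ, (fun i => (∑ j, Abar i j * x j) + bbar i) ∈ -K) :
    c1 n B * edist0 Abar bbar B ≤ rrf K Abar bbar ∧
      rrf K Abar bbar ≤ c2 B * edist0 Abar bbar B := by
  have hKne : K.Nonempty := hint.mono interior_subset
  have hBne : B.Nonempty := B_nonempty hB
  have hBne0 : ∀ l ∈ B, l ≠ 0 := fun l hl h0 => hB.2.2.2.1 (h0 ▸ hl)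
  set T : Set ℝ := {t : ℝ | ∃ y ∈ Epi Abar bbar B, t = euclNorm y} with hT
  set d : ℝ := edist0 Abar bbar B with hd
  have hdT : d = sInf T := rfl
  set S2 : Set ℝ := {t : ℝ | ∃ l ∈ B, t = ∑ i, |l i|} with hS2
  set I : ℝ := sInf S2 with hI
  set S1 : Set ℝ := {t : ℝ | ∃ l ∈ B, ∃ u : Fin m → (Fin (n + 1) → ℝ),
    (∀ i, euclNorm (u i) ≤ 1) ∧ t = euclNorm (∑ i, l i • u i)} with hS1def
  set M : ℝ := sSup S1 with hM
  have hc1M : c1 n B = M⁻¹ := rfl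
  have hc2I : c2 B = I⁻¹ := rfl
  -- basic facts on T and d
  have hTne : T.Nonempty := by
    obtain ⟨l₀, hl₀⟩ := hBne
    exact ⟨_, ⟨_, ⟨l₀, hl₀, 0, le_rfl, rfl⟩, rfl⟩⟩
  have hTbdd : BddBelow T := ⟨0, by rintro t ⟨y, _, rfl⟩; exact enorm_nonneg' y⟩
  have hd0 : 0 ≤ d := le_csInf hTne (by rintro t ⟨y, _, rfl⟩; exact enorm_nonneg' y)
  have hdle : ∀ y ∈ Epi Abar bbar B, d ≤ euclNorm y := fun y hy => csInf_le hTbdd ⟨y, hy, rfl⟩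
  -- facts on I and M
  have hIle : ∀ l ∈ B, I ≤ ∑ i, |l i| := fun l hl =>
    csInf_le ⟨0, by rintro t ⟨l', _, rfl⟩; positivity⟩ ⟨l, hl, rfl⟩
  have hIpos : 0 < I := by
    obtain ⟨l₁, hl₁B, hmin⟩ := hB.1.exists_isMinOn hBne continuous_sum_abs.continuousOn
    have h1 : 0 < ∑ i, |l₁ i| := sum_abs_pos (hBne0 l₁ hl₁B)
    have h2 : (∑ i, |l₁ i|) ≤ I := le_csInf ⟨_, ⟨_, hBne.choose_spec, rfl⟩⟩
      (by rintro t ⟨l', hl', rfl⟩; exact hmin hl')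
    linarith
  have hMle : ∀ l ∈ B, (∑ i, |l i|) ≤ M := fun l hl =>
    le_csSup (S1_bddAbove hB.1) (sum_abs_mem_S1 (fun _ _ => trivial) hl)
  have hMpos : 0 < M := by
    obtain ⟨l₀, hl₀⟩ := hBne
    exact lt_of_lt_of_le (sum_abs_pos (hBne0 l₀ hl₀)) (hMle l₀ hl₀)
  -- the admissible set
  set A' : Set ℝ := {α : ℝ | 0 ≤ α ∧ (fun _ => α) ∈ Adm K Abar bbar} with hA'
  have hrrf : rrf K Abar bbar = sSup A' := rfl
  have h0A : (0 : ℝ) ∈ A' := by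
    obtain ⟨x₀, hx₀⟩ := hfeas
    refine ⟨le_rfl, fun i => le_rfl, x₀, ?_⟩
    intro a b hrow
    have hab : ∀ i, a i = Abar i ∧ b i = bbar i := by
      intro i
      have h0 : Fin.snoc (a i - Abar i) (b i - bbar i) = (0 : Fin (n+1) → ℝ) :=
        euclNorm_eq_zero' (hrow i)
      constructor
      · funext j
        have := congrFun h0 (Fin.castSucc j)
        simp only [Fin.snoc_castSucc, Pi.sub_apply, Pi.zero_apply] at this
        linarith
      · have := congrFun h0 (Fin.last n)
        simp only [Fin.snoc_last, Pi.zero_apply] at this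
        linarith
    have ha : a = Abar := funext fun i => (hab i).1
    have hb : b = bbar := funext fun i => (hab i).2
    rw [ha, hb]; exact hx₀
  -- key upper bound estimate
  have hkey : ∀ α ∈ A', α * I ≤ d := by
    rintro α ⟨hα0, _, x, hx⟩
    set N : ℝ := euclNorm (Fin.snoc x 1) with hN
    have hN1 : 1 ≤ N := one_le_enorm_snoc_one x
    have hNpos : 0 < N := lt_of_lt_of_le one_pos hN1
    have hNsq : N ^ 2 = (∑ j, x j ^ 2) + 1 := by
      rw [hN, enorm_snoc_sq]; norm_num
    -- step 1: for every l in B the nominal value is quantitatively negative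
    have hlb : ∀ l ∈ B, ∑ i, l i * ((∑ j, Abar i j * x j) + bbar i)
        ≤ -(α * (∑ i, |l i|) * N) := by
      intro l hl
      set c : Fin m → ℝ := fun i => α * sgn (l i) / N with hc
      set a : Fin m → Fin n → ℝ := fun i => Abar i + c i • x with ha
      set b : Fin m → ℝ := fun i => bbar i + c i with hb
      have hrow : ∀ i, euclNorm (Fin.snoc (a i - Abar i) (b i - bbar i)) ≤ (fun _ : Fin m => α) i := by
        intro i
        have h1 : a i - Abar i = c i • x := by rw [ha]; simp
        have h2 : b i - bbar i = c i * 1 := by rw [hb]; simp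
        rw [h1, h2, snoc_smul, enorm_smul', ← hN]
        have h3 : |c i| = α / N := by
          rw [hc]; simp only []
          rw [abs_div, abs_mul, abs_sgn, abs_of_nonneg hα0, abs_of_pos hNpos, mul_one]
        rw [h3]
        have : α / N * N = α := div_mul_cancel₀ α hNpos.ne'
        rw [this]
      have hz := hx a b hrow
      have hlz : ∑ i, l i * ((∑ j, a i j * x j) + b i) ≤ 0 := dual_pair hB hl hz
      have hexp : ∀ i, (∑ j, a i j * x j) + b i
          = ((∑ j, Abar i j * x j) + bbar i) + c i * N ^ 2 := by
        intro i
        have h4 : ∑ j, a i j * x j = (∑ j, Abar i j * x j) + c i * ∑ j, x j ^ 2 := by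
          rw [ha]; simp only [Pi.add_apply, Pi.smul_apply, smul_eq_mul]
          rw [Finset.mul_sum, ← Finset.sum_add_distrib]
          apply Finset.sum_congr rfl; intros; ring
        rw [h4, hb, hNsq]; ring
      have hsum : ∑ i, l i * ((∑ j, a i j * x j) + b i)
          = (∑ i, l i * ((∑ j, Abar i j * x j) + bbar i)) + (α * (∑ i, |l i|) * N) := by
        calc ∑ i, l i * ((∑ j, a i j * x j) + b i)
            = ∑ i, (l i * ((∑ j, Abar i j * x j) + bbar i) + |l i| * (α * N)) := by
              apply Finset.sum_congr rfl; intro i _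
              rw [hexp i, hc]; simp only []
              have : l i * (α * sgn (l i) / N * N ^ 2) = (l i * sgn (l i)) * (α * N) := by
                field_simp
              rw [mul_add, this, mul_sgn]
          _ = (∑ i, l i * ((∑ j, Abar i j * x j) + bbar i)) + (α * (∑ i, |l i|) * N) := by
              rw [Finset.sum_add_distrib, ← Finset.sum_mul]; ring
      linarith [hsum ▸ hlz]
    -- step 2: every element of T dominates α * I
    refine le_csInf hTne ?_
    rintro t ⟨y, ⟨l, hl, w, hw, rfl⟩, rfl⟩
    set φ : Fin n → ℝ := fun j => ∑ i, l i * Abar i j with hφ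
    set ψ : ℝ := -(∑ i, l i * bbar i) + w with hψ
    have hQ : ∑ k, Fin.snoc φ ψ k * Fin.snoc x (-1) k
        = (∑ i, l i * ((∑ j, Abar i j * x j) + bbar i)) - w := by
      rw [snoc_dot, hφ, hψ, swap_sum]
      have : ∑ i, l i * ((∑ j, Abar i j * x j) + bbar i)
          = (∑ i, l i * ∑ j, Abar i j * x j) + ∑ i, l i * bbar i := by
        rw [← Finset.sum_add_distrib]; apply Finset.sum_congr rfl; intros; ring
      rw [this]; ring
    have hcs : |∑ k, Fin.snoc φ ψ k * Fin.snoc x (-1) k|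
        ≤ euclNorm (Fin.snoc φ ψ) * N := by
      have := enorm_cauchy (Fin.snoc φ ψ) (Fin.snoc x (-1))
      have hneg : euclNorm (Fin.snoc x (-1)) = N := by
        rw [show ((-1 : ℝ)) = -(1:ℝ) from rfl, enorm_snoc_neg, hN]
      rwa [hneg] at this
    have h1 : α * (∑ i, |l i|) * N + w ≤ -(∑ k, Fin.snoc φ ψ k * Fin.snoc x (-1) k) := by
      rw [hQ]; have := hlb l hl; linarith
    have h2 : α * (∑ i, |l i|) * N ≤ euclNorm (Fin.snoc φ ψ) * N := by
      have := (neg_le_abs _).trans hcs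
      linarith
    have h3 : α * (∑ i, |l i|) ≤ euclNorm (Fin.snoc φ ψ) :=
      le_of_mul_le_mul_right (by linarith) hNpos
    calc α * I ≤ α * (∑ i, |l i|) := mul_le_mul_of_nonneg_left (hIle l hl) hα0
      _ ≤ euclNorm (Fin.snoc φ ψ) := h3
  have hbddA : BddAbove A' := by
    refine ⟨I⁻¹ * d, fun α hα => ?_⟩
    have h := hkey α hα
    calc α = α * I * I⁻¹ := by field_simp
      _ ≤ d * I⁻¹ := mul_le_mul_of_nonneg_right h (inv_nonneg.mpr hIpos.le)
      _ = I⁻¹ * d := mul_comm _ _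
  have hrrf0 : 0 ≤ rrf K Abar bbar := le_csSup hbddA h0A
  have hupper : rrf K Abar bbar ≤ c2 B * edist0 Abar bbar B := by
    rw [hrrf, hc2I]
    exact csSup_le ⟨0, h0A⟩ fun α hα => by
      have h := hkey α hα
      calc α = α * I * I⁻¹ := by field_simp
        _ ≤ d * I⁻¹ := mul_le_mul_of_nonneg_right h (inv_nonneg.mpr hIpos.le)
        _ = I⁻¹ * d := mul_comm _ _
  refine ⟨?_, hupper⟩
  -- lower bound
  rcases eq_or_lt_of_le hd0 with hdz | hdpos
  · show M⁻¹ * d ≤ rrf K Abar bbar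
    rw [← hdz, mul_zero]; exact hrrf0
  -- now 0 < d
  have hmain : ∀ α : ℝ, 0 ≤ α → α * M < d → α ∈ A' := by
    intro α hα0 hαM
    -- projection onto the closure of the lifted epigraphical set
    set D : Set (Euc (n+1)) := closure (liftE (Epi Abar bbar B)) with hDdef
    have hEpiConv : Convex ℝ (liftE (Epi Abar bbar B)) := (epi_convex Abar bbar hB.2.1).linear_preimage
        (WithLp.linearEquiv 2 ℝ (Fin (n+1) → ℝ)).toLinearMap
    have hDconv : Convex ℝ D := hEpiConv.closure
    have hDne : D.Nonempty := by
      obtain ⟨l₀, hl₀⟩ := hBne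
      exact ⟨_, subset_closure (mem_liftE.mpr ⟨l₀, hl₀, 0, le_rfl, rfl⟩)⟩
    obtain ⟨v, hvD, hvmin⟩ :=
      exists_norm_eq_iInf_of_complete_convex hDne isClosed_closure.isComplete hDconv 0
    have hproj : ∀ y ∈ D, ‖v‖^2 ≤ (inner ℝ v y : ℝ) := by
      intro y hy
      have h := (norm_eq_iInf_iff_real_inner_le_zero hDconv hvD).mp hvmin y hy
      rw [zero_sub, inner_neg_left, inner_sub_right] at h
      have hvv : (inner ℝ v v : ℝ) = ‖v‖^2 := real_inner_self_eq_norm_sq v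
      linarith
    have hdV : d ≤ ‖v‖ := by
      have hsub : liftE (Epi Abar bbar B) ⊆ {y : Euc (n+1) | d ≤ ‖y‖} := by
        intro y hy
        have h1 : d ≤ euclNorm (WithLp.equiv 2 (Fin (n+1) → ℝ) y) := hdle _ hy
        rw [enorm_eq] at h1
        exact h1
      exact closure_minimal hsub (isClosed_le continuous_const continuous_norm) hvD
    set V : ℝ := ‖v‖ with hVdef
    have hVpos : 0 < V := lt_of_lt_of_le hdpos hdV
    set vf : Fin (n+1) → ℝ := WithLp.equiv 2 (Fin (n+1) → ℝ) v with hvfdef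
    set xt : Fin n → ℝ := Fin.init vf with hxtdef
    set sc : ℝ := vf (Fin.last n) with hscdef
    have hsnoc : (Fin.snoc xt sc : Fin (n+1) → ℝ) = vf := Fin.snoc_init_self vf
    have hVnorm : euclNorm (Fin.snoc xt sc) = V := by
      rw [hsnoc, enorm_eq]; rfl
    have hkeyineq : ∀ l ∈ B, ∀ w : ℝ, 0 ≤ w →
        V^2 ≤ (∑ j, xt j * (∑ i, l i * Abar i j)) + sc * (-(∑ i, l i * bbar i) + w) := by
      intro l hl w hw
      have hmem : toE (Fin.snoc (fun j => ∑ i, l i * Abar i j) (-(∑ i, l i * bbar i) + w)) ∈ D :=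
        subset_closure (mem_liftE.mpr ⟨l, hl, w, hw, rfl⟩)
      have h := hproj _ hmem
      have hveq : v = toE vf := rfl
      rw [hveq, inner_toE, ← hsnoc, snoc_dot] at h
      exact h
    have hs0 : 0 ≤ sc := by
      by_contra hsneg
      push_neg at hsneg
      obtain ⟨l₀, hl₀⟩ := hBne
      set P : ℝ := (∑ j, xt j * (∑ i, l₀ i * Abar i j)) + sc * (-(∑ i, l₀ i * bbar i)) with hP
      set q : ℝ := (V^2 - 1 - P) / sc with hq
      have hw : (0:ℝ) ≤ max 0 q := le_max_left _ _
      have h := hkeyineq l₀ hl₀ (max 0 q) hw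
      have hexp : (∑ j, xt j * (∑ i, l₀ i * Abar i j)) + sc * (-(∑ i, l₀ i * bbar i) + max 0 q)
          = P + sc * max 0 q := by rw [hP]; ring
      rw [hexp] at h
      have h2 : sc * max 0 q ≤ sc * q := mul_le_mul_of_nonpos_left (le_max_right 0 q) hsneg.le
      have h3 : sc * q = V^2 - 1 - P := by
        rw [hq, mul_comm]; exact div_mul_cancel₀ _ hsneg.ne
      linarith
    rcases eq_or_lt_of_le hs0 with hsz | hspos
    · -- the last coordinate of the projection vanishes
      obtain ⟨x₀, hx₀⟩ := hfeas
      set N₀ : ℝ := euclNorm (Fin.snoc x₀ 1) with hN₀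
      have hN₀0 : 0 < N₀ := lt_of_lt_of_le one_pos (one_le_enorm_snoc_one x₀)
      have hVα : α * M < V := lt_of_lt_of_le hαM hdV
      set t : ℝ := α * M * N₀ / (V * (V - α * M)) with htdef
      have htden : 0 < V * (V - α * M) := mul_pos hVpos (by linarith)
      have ht0 : 0 ≤ t := div_nonneg (by positivity) htden.le
      set x : Fin n → ℝ := x₀ - t • xt with hxdef
      refine ⟨hα0, fun i => hα0, x, feas_of K hclosed hconv hcone hKne B hB Abar bbar α hα0 x ?_⟩
      intro l hl
      have hφ : V^2 ≤ ∑ j, xt j * (∑ i, l i * Abar i j) := by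
        have h := hkeyineq l hl 0 le_rfl
        rw [← hsz] at h
        simpa using h
      have hx₀le : ∑ i, l i * ((∑ j, Abar i j * x₀ j) + bbar i) ≤ 0 := dual_pair hB hl hx₀
      have hexp : ∑ i, l i * ((∑ j, Abar i j * x j) + bbar i)
          = (∑ i, l i * ((∑ j, Abar i j * x₀ j) + bbar i))
            - t * ∑ j, xt j * (∑ i, l i * Abar i j) := by
        have h1 : ∀ i, (∑ j, Abar i j * x j) = (∑ j, Abar i j * x₀ j) - t * ∑ j, Abar i j * xt j := by
          intro i
          rw [hxdef]
          simp only [Pi.sub_apply, Pi.smul_apply, smul_eq_mul]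
          rw [Finset.mul_sum, ← Finset.sum_sub_distrib]
          apply Finset.sum_congr rfl; intros; ring
        have h2 : ∑ j, xt j * (∑ i, l i * Abar i j) = ∑ i, l i * ∑ j, Abar i j * xt j := by
          rw [← swap_sum]
          apply Finset.sum_congr rfl; intros; ring
        rw [h2]
        calc ∑ i, l i * ((∑ j, Abar i j * x j) + bbar i)
            = ∑ i, (l i * ((∑ j, Abar i j * x₀ j) + bbar i) - t * (l i * ∑ j, Abar i j * xt j)) := by
              apply Finset.sum_congr rfl; intro i _; rw [h1 i]; ring
          _ = _ := by rw [Finset.sum_sub_distrib, Finset.mul_sum]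
      have hxt0 : euclNorm (Fin.snoc xt (0:ℝ)) = V := by rw [show (0:ℝ) = sc from hsz, hVnorm]
      have hone : (1:ℝ) - t * 0 = 1 := by ring
      have hsnocx : (Fin.snoc x 1 : Fin (n+1) → ℝ) = Fin.snoc x₀ 1 - t • (Fin.snoc xt (0:ℝ) : Fin (n+1) → ℝ) := by
        rw [← snoc_smul t xt (0:ℝ), snoc_sub, hone, hxdef]
      have hNle : euclNorm (Fin.snoc x 1) ≤ N₀ + t * V := by
        rw [hsnocx]
        refine (enorm_sub_smul_le _ _ _).trans ?_
        rw [hxt0, abs_of_nonneg ht0, hN₀]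
      have htV : t * (V * (V - α * M)) = α * M * N₀ := by
        rw [htdef]; exact div_mul_cancel₀ _ htden.ne'
      have hfin : α * (∑ i, |l i|) * euclNorm (Fin.snoc x 1) ≤ t * V^2 := by
        calc α * (∑ i, |l i|) * euclNorm (Fin.snoc x 1) ≤ α * M * (N₀ + t * V) := by
              apply mul_le_mul (mul_le_mul_of_nonneg_left (hMle l hl) hα0) hNle
                (enorm_nonneg' _) (by positivity)
          _ = t * V^2 := by linear_combination -htV
      calc ∑ i, l i * ((∑ j, Abar i j * x j) + bbar i)
          ≤ 0 - t * V^2 := by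
            rw [hexp]
            have := mul_le_mul_of_nonneg_left hφ ht0
            linarith
        _ ≤ -(α * (∑ i, |l i|) * euclNorm (Fin.snoc x 1)) := by linarith
    · -- the last coordinate of the projection is positive
      have hsc' : sc ≠ 0 := hspos.ne'
      set x : Fin n → ℝ := (-sc⁻¹) • xt with hxdef
      refine ⟨hα0, fun i => hα0, x, feas_of K hclosed hconv hcone hKne B hB Abar bbar α hα0 x ?_⟩
      intro l hl
      have h := hkeyineq l hl 0 le_rfl
      have h' : V^2 ≤ (∑ j, xt j * (∑ i, l i * Abar i j)) - sc * (∑ i, l i * bbar i) := by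
        calc V^2 ≤ _ := h
          _ = _ := by ring
      have hexp : ∑ i, l i * ((∑ j, Abar i j * x j) + bbar i)
          = (-sc⁻¹) * ((∑ j, xt j * (∑ i, l i * Abar i j)) - sc * (∑ i, l i * bbar i)) := by
        have h1 : ∀ i, (∑ j, Abar i j * x j) = (-sc⁻¹) * ∑ j, Abar i j * xt j := by
          intro i
          rw [hxdef]
          simp only [Pi.smul_apply, smul_eq_mul]
          rw [Finset.mul_sum]
          apply Finset.sum_congr rfl; intros; ring
        have h2 : ∑ j, xt j * (∑ i, l i * Abar i j) = ∑ i, l i * ∑ j, Abar i j * xt j := by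
          rw [← swap_sum]
          apply Finset.sum_congr rfl; intros; ring
        rw [h2]
        calc ∑ i, l i * ((∑ j, Abar i j * x j) + bbar i)
            = ∑ i, ((-sc⁻¹) * (l i * ∑ j, Abar i j * xt j) + l i * bbar i) := by
              apply Finset.sum_congr rfl; intro i _; rw [h1 i]; ring
          _ = (-sc⁻¹) * (∑ i, l i * ∑ j, Abar i j * xt j) + ∑ i, l i * bbar i := by
              rw [Finset.sum_add_distrib, Finset.mul_sum]
          _ = _ := by field_simp; ring
      have hN : euclNorm (Fin.snoc x 1) = V / sc := by
        have hinvsc : (-sc⁻¹) * (-sc) = 1 := by field_simp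
        have h3 : (Fin.snoc x 1 : Fin (n+1) → ℝ) = (-sc⁻¹) • (Fin.snoc xt (-sc) : Fin (n+1) → ℝ) := by
          rw [← snoc_smul (-sc⁻¹) xt (-sc), hinvsc, hxdef]
        rw [h3, enorm_smul', enorm_snoc_neg, hVnorm, abs_neg, abs_inv, abs_of_pos hspos]
        rw [inv_mul_eq_div]
      rw [hexp, hN]
      have hSV : α * (∑ i, |l i|) ≤ V := by
        have h4 : α * (∑ i, |l i|) ≤ α * M := mul_le_mul_of_nonneg_left (hMle l hl) hα0
        have h5 : α * M < V := lt_of_lt_of_le hαM hdV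
        linarith
      have hSz0 : 0 ≤ α * (∑ i, |l i|) := by positivity
      have h5 : α * (∑ i, |l i|) * V ≤ V^2 := by nlinarith
      have h6 : α * (∑ i, |l i|) * V
          ≤ (∑ j, xt j * (∑ i, l i * Abar i j)) - sc * (∑ i, l i * bbar i) := le_trans h5 h'
      have hscinv : (0:ℝ) < sc⁻¹ := inv_pos.mpr hspos
      rw [div_eq_mul_inv]
      have h7 := mul_le_mul_of_nonneg_left h6 hscinv.le
      linarith [h7]
  by_contra hcon
  push_neg at hcon
  have hcon' : sSup A' < M⁻¹ * d := by rw [← hc1M]; exact hcon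
  have hss0 : (0:ℝ) ≤ sSup A' := hrrf0
  set α := (sSup A' + M⁻¹ * d) / 2 with hα
  have hMd : 0 < M⁻¹ * d := by positivity
  have hα0 : 0 ≤ α := by rw [hα]; linarith
  have hαlt : α < M⁻¹ * d := by rw [hα]; linarith
  have hαgt : sSup A' < α := by rw [hα]; linarith
  have hαM : α * M < d := by
    have := mul_lt_mul_of_pos_right hαlt hMpos
    rwa [inv_mul_eq_div, div_mul_cancel₀ d hMpos.ne'] at this
  exact absurd (le_csSup hbddA (hmain α hα0 hαM)) (not_le.mpr hαgt)
end
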